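/- Let μ be a probability measure on ℝ with finite first moment and let N ≥ 1. Define θ*_i = F_μ⁻¹((2i − 1)/(2N)) for i = 1, …, N and the quantile distribution Z_{θ*} = (1/N) ∑_{i=1}^N δ_{θ*_i}. Then for every θ ∈ ℝ^N with quantile distribution Z_θ = (1/N) ∑_{i=1}^N δ_{θ_i}, we have W_1(μ, Z_{θ*}) ≤ W_1(μ, Z_θ); that is, Z_{θ*} achieves the minimal 1-Wasserstein distance from μ among all uniform mixtures of N Diracs. -/

import Mathlib

open MeasureTheory Set
open scoped ENNReal

/-- The CDF of a measure on ℝ: `F(y) = μ((-∞, y])`. -/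
noncomputable def cdfFn (μ : Measure ℝ) (y : ℝ) : ℝ := (μ (Iic y)).toReal

/-- The quantile function (generalized inverse CDF): `F⁻¹(ω) = inf {y | ω ≤ F(y)}`. -/
noncomputable def quantileFn (μ : Measure ℝ) (ω : ℝ) : ℝ := sInf {y : ℝ | ω ≤ cdfFn μ y}

/-- The quantile distribution with atoms `θ : Fin N → ℝ`, i.e. `(1/N) ∑ᵢ δ_{θᵢ}`. -/
noncomputable def quantDist {N : ℕ} (θ : Fin N → ℝ) : Measure ℝ :=
  (N : ℝ≥0∞)⁻¹ • ∑ i : Fin N, Measure.dirac (θ i)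

/-- The 1-Wasserstein distance `W₁(μ, ν) = ∫_0^1 |F_μ⁻¹(ω) - F_ν⁻¹(ω)| dω`. -/
noncomputable def W1 (μ ν : Measure ℝ) : ℝ :=
  ∫ ω in (0:ℝ)..1, |quantileFn μ ω - quantileFn ν ω|


open Filter ProbabilityTheory
open scoped Topology

section Aux
variable {μ : Measure ℝ} [IsProbabilityMeasure μ]

lemma cdfFn_eq_cdf (μ : Measure ℝ) [IsProbabilityMeasure μ] (y : ℝ) : cdfFn μ y = cdf μ y :=
  (cdf_eq_real μ y).symm

lemma quant_set_nonempty (hω : ω < 1) : {y : ℝ | ω ≤ cdfFn μ y}.Nonempty := by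
  have h := (tendsto_cdf_atTop μ).eventually (eventually_ge_nhds hω)
  obtain ⟨y, hy⟩ := h.exists
  exact ⟨y, by simpa [cdfFn_eq_cdf] using hy⟩

lemma quant_set_bddBelow (hω : 0 < ω) : BddBelow {y : ℝ | ω ≤ cdfFn μ y} := by
  have h := (tendsto_cdf_atBot μ).eventually (eventually_lt_nhds hω)
  obtain ⟨y₀, hy₀⟩ := h.exists
  refine ⟨y₀, fun y hy => ?_⟩
  by_contra hlt
  push_neg at hlt
  have : cdf μ y ≤ cdf μ y₀ := monotone_cdf μ hlt.le
  have hy' : ω ≤ cdf μ y := by simpa [cdfFn_eq_cdf] using hy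
  linarith [hy'.trans this]

lemma le_cdf_quantile (hω : ω ∈ Ioo (0:ℝ) 1) : ω ≤ cdfFn μ (quantileFn μ ω) := by
  have hne := quant_set_nonempty (μ := μ) hω.2
  have hbdd := quant_set_bddBelow (μ := μ) hω.1
  rw [cdfFn_eq_cdf]
  have htend : Tendsto (cdf μ) (𝓝[>] (quantileFn μ ω)) (𝓝 (cdf μ (quantileFn μ ω))) :=
    ((cdf μ).right_continuous _).tendsto.mono_left (nhdsWithin_mono _ Ioi_subset_Ici_self)
  refine ge_of_tendsto htend ?_
  filter_upwards [self_mem_nhdsWithin] with y (hy : quantileFn μ ω < y)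
  obtain ⟨s, hs, hsy⟩ := exists_lt_of_csInf_lt hne hy
  exact le_trans (by simpa [cdfFn_eq_cdf] using hs) (monotone_cdf μ hsy.le)

lemma quantile_le_iff (hω : ω ∈ Ioo (0:ℝ) 1) {y : ℝ} :
    quantileFn μ ω ≤ y ↔ ω ≤ cdfFn μ y := by
  constructor
  · intro h
    refine (le_cdf_quantile (μ := μ) hω).trans ?_
    simpa [cdfFn_eq_cdf] using monotone_cdf μ h
  · intro h
    exact csInf_le (quant_set_bddBelow hω.1) h

lemma quantileFn_monotoneOn : MonotoneOn (quantileFn μ) (Ioo (0:ℝ) 1) := by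
  intro ω₁ h₁ ω₂ h₂ h12
  exact csInf_le_csInf (quant_set_bddBelow h₁.1) (quant_set_nonempty h₂.2)
    (fun y hy => le_trans h12 hy)


lemma quantileFn_aemeasurable :
    AEMeasurable (quantileFn μ) (volume.restrict (Ioo (0:ℝ) 1)) :=
  aemeasurable_restrict_of_monotoneOn measurableSet_Ioo quantileFn_monotoneOn

lemma map_quantileFn (μ : Measure ℝ) [IsProbabilityMeasure μ] :
    Measure.map (quantileFn μ) (volume.restrict (Ioo (0:ℝ) 1)) = μ := by
  have hmeas := quantileFn_aemeasurable (μ := μ)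
  have hprob : IsProbabilityMeasure (volume.restrict (Ioo (0:ℝ) 1)) := by
    constructor
    simp [Real.volume_Ioo]
  have : IsProbabilityMeasure (Measure.map (quantileFn μ) (volume.restrict (Ioo (0:ℝ) 1))) :=
    Measure.isProbabilityMeasure_map hmeas
  refine Measure.ext_of_Iic _ _ (fun y => ?_)
  rw [Measure.map_apply_of_aemeasurable hmeas measurableSet_Iic,
    Measure.restrict_apply' measurableSet_Ioo]
  have hset : quantileFn μ ⁻¹' Iic y ∩ Ioo (0:ℝ) 1 = Iic (cdfFn μ y) ∩ Ioo (0:ℝ) 1 := by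
    ext ω
    simp only [mem_inter_iff, mem_preimage, mem_Iic, and_congr_left_iff]
    exact fun hω => quantile_le_iff hω
  rw [hset]
  have h0 : 0 ≤ cdfFn μ y := by rw [cdfFn_eq_cdf]; exact cdf_nonneg μ y
  have h1 : cdfFn μ y ≤ 1 := by rw [cdfFn_eq_cdf]; exact cdf_le_one μ y
  have hvol : volume (Iic (cdfFn μ y) ∩ Ioo (0:ℝ) 1) = ENNReal.ofReal (cdfFn μ y) := by
    rcases lt_or_eq_of_le h1 with h1' | h1'
    · have : Iic (cdfFn μ y) ∩ Ioo (0:ℝ) 1 = Ioc 0 (cdfFn μ y) := by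
        ext ω
        simp only [mem_inter_iff, mem_Iic, mem_Ioo, mem_Ioc]
        constructor
        · rintro ⟨h, h0', _⟩; exact ⟨h0', h⟩
        · rintro ⟨h0', h⟩; exact ⟨h, h0', lt_of_le_of_lt h h1'⟩
      rw [this, Real.volume_Ioc, sub_zero]
    · have : Iic (cdfFn μ y) ∩ Ioo (0:ℝ) 1 = Ioo (0:ℝ) 1 := by
        rw [inter_eq_right]
        intro ω hω
        rw [mem_Iic, h1']
        exact hω.2.le
      rw [this, Real.volume_Ioo, sub_zero, h1']
  rw [hvol, cdfFn_eq_cdf, ofReal_cdf]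

lemma quantileFn_integrableOn (hint : Integrable (fun x : ℝ => x) μ) :
    IntegrableOn (quantileFn μ) (Ioo (0:ℝ) 1) := by
  have hmeas := quantileFn_aemeasurable (μ := μ)
  rw [← map_quantileFn μ] at hint
  rw [IntegrableOn]
  have := (integrable_map_measure aestronglyMeasurable_id hmeas).mp hint
  simpa using this


end Aux

lemma count_ge_iff {N : ℕ} {c : Fin N → ℝ} (hc : Monotone c) (k : Fin N) (y : ℝ) :
    (k : ℕ) + 1 ≤ (Finset.univ.filter (fun i => c i ≤ y)).card ↔ c k ≤ y := by
  constructor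
  · intro h
    by_contra hy
    push_neg at hy
    have hsub : Finset.univ.filter (fun i => c i ≤ y) ⊆ Finset.Iio k := by
      intro i hi
      rw [Finset.mem_filter] at hi
      rw [Finset.mem_Iio]
      by_contra hik
      push_neg at hik
      exact absurd (le_trans (hc hik) hi.2) (not_le.mpr hy)
    have := Finset.card_le_card hsub
    rw [Fin.card_Iio] at this
    omega
  · intro h
    have hsub : Finset.Iic k ⊆ Finset.univ.filter (fun i => c i ≤ y) := by
      intro i hi
      rw [Finset.mem_Iic] at hi
      rw [Finset.mem_filter]
      exact ⟨Finset.mem_univ _, le_trans (hc hi) h⟩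
    have := Finset.card_le_card hsub
    rwa [Fin.card_Iic] at this

lemma cdfFn_quantDist {N : ℕ} (hN : 0 < N) (c : Fin N → ℝ) (y : ℝ) :
    cdfFn (quantDist c) y
      = ((Finset.univ.filter (fun i => c i ≤ y)).card : ℝ) / N := by
  have hNne : (N : ℝ≥0∞) ≠ 0 := Nat.cast_ne_zero.mpr hN.ne'
  rw [cdfFn, quantDist, Measure.smul_apply, Measure.finset_sum_apply]
  have : ∀ i : Fin N, Measure.dirac (c i) (Iic y) = if c i ≤ y then 1 else 0 := by
    intro i
    rw [Measure.dirac_apply' _ measurableSet_Iic]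
    by_cases h : c i ≤ y <;> simp [Set.indicator_apply, Set.mem_Iic, h]
  simp_rw [this]
  rw [Finset.sum_boole]
  simp only [smul_eq_mul]
  rw [ENNReal.toReal_mul, ENNReal.toReal_inv]
  simp [div_eq_mul_inv, mul_comm]

lemma quantileFn_quantDist {N : ℕ} (hN : 0 < N) {c : Fin N → ℝ} (hc : Monotone c) (k : Fin N)
    {ω : ℝ} (hω : ω ∈ Ioc ((k : ℝ) / N) (((k : ℝ) + 1) / N)) :
    quantileFn (quantDist c) ω = c k := by
  have hNpos : (0 : ℝ) < N := by exact_mod_cast hN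
  have hset : {y : ℝ | ω ≤ cdfFn (quantDist c) y} = Ici (c k) := by
    ext y
    rw [mem_setOf_eq, mem_Ici, cdfFn_quantDist hN]
    constructor
    · intro h
      rw [← count_ge_iff hc k y]
      have : (k : ℝ) / N < ((Finset.univ.filter (fun i => c i ≤ y)).card : ℝ) / N :=
        lt_of_lt_of_le hω.1 h
      have hlt : (k : ℝ) < ((Finset.univ.filter (fun i => c i ≤ y)).card : ℝ) :=
        (div_lt_div_iff_of_pos_right hNpos).mp this
      have : (k : ℕ) < (Finset.univ.filter (fun i => c i ≤ y)).card := by exact_mod_cast hlt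
      omega
    · intro h
      rw [← count_ge_iff hc k y] at h
      refine le_trans hω.2 ?_
      apply div_le_div_of_nonneg_right ?_ hNpos.le
      push_cast
      exact_mod_cast h
  rw [quantileFn, hset, csInf_Ici]


lemma integral_Ioo_abs_sub_le {g : ℝ → ℝ} {a m b c : ℝ} (ham : a < m) (hmb : m < b)
    (hmid : b - m = m - a) (hmono : MonotoneOn g (Set.Ioo a b))
    (hg : IntegrableOn g (Set.Ioo a b)) :
    ∫ ω in a..b, |g ω - g m| ≤ ∫ ω in a..b, |g ω - c| := by
  set d := g m with hd
  have hm : m ∈ Set.Ioo a b := ⟨ham, hmb⟩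
  have hab : a < b := ham.trans hmb
  -- integrability helpers
  have hIoo1 : Set.Ioo a m ⊆ Set.Ioo a b := Set.Ioo_subset_Ioo le_rfl hmb.le
  have hIoo2 : Set.Ioo m b ⊆ Set.Ioo a b := Set.Ioo_subset_Ioo ham.le le_rfl
  have habs : ∀ (e : ℝ) (s : Set ℝ), s ⊆ Set.Ioo a b →
      IntegrableOn (fun ω => |g ω - e|) s := by
    intro e s hs
    exact (((hg.mono_set hs).sub ((integrableOn_const_iff enorm_ne_top).mpr
      (Or.inr ((measure_mono hs).trans_lt measure_Ioo_lt_top)))).abs)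
  have hII : ∀ (e : ℝ) (x y : ℝ), x < y → Set.Ioo x y ⊆ Set.Ioo a b →
      IntervalIntegrable (fun ω => |g ω - e|) volume x y := by
    intro e x y hxy hsub
    rw [intervalIntegrable_iff_integrableOn_Ioo_of_le hxy.le]
    exact habs e _ hsub
  have key : ∀ e : ℝ, ∫ ω in a..b, |g ω - e|
      = (∫ ω in Set.Ioo a m, |g ω - e|) + ∫ ω in Set.Ioo m b, |g ω - e| := by
    intro e
    rw [← intervalIntegral.integral_add_adjacent_intervals (hII e a m ham hIoo1)
      (hII e m b hmb hIoo2),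
      intervalIntegral.integral_of_le ham.le, intervalIntegral.integral_of_le hmb.le,
      MeasureTheory.integral_Ioc_eq_integral_Ioo, MeasureTheory.integral_Ioc_eq_integral_Ioo]
  rw [key, key]
  have hvol1 : (volume (Set.Ioo a m)).toReal = m - a := by
    rw [Real.volume_Ioo, ENNReal.toReal_ofReal (by linarith)]
  have hvol2 : (volume (Set.Ioo m b)).toReal = b - m := by
    rw [Real.volume_Ioo, ENNReal.toReal_ofReal (by linarith)]
  rcases le_total d c with hc | hc
  · -- c ≥ d : lower piece gains (c-d), upper loses at most (c-d)
    have hlow : ∫ ω in Set.Ioo a m, |g ω - d|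
        ≤ (∫ ω in Set.Ioo a m, |g ω - c|) - (c - d) * (m - a) := by
      have : ∫ ω in Set.Ioo a m, |g ω - d|
          ≤ ∫ ω in Set.Ioo a m, (|g ω - c| - (c - d)) := by
        refine setIntegral_mono_on (habs d _ hIoo1)
          ((habs c _ hIoo1).sub ((integrableOn_const_iff enorm_ne_top).mpr (Or.inr measure_Ioo_lt_top)))
          measurableSet_Ioo ?_
        intro ω hω
        have hgω : g ω ≤ d := hmono (hIoo1 hω) hm hω.2.le
        rw [abs_of_nonpos (by linarith), abs_of_nonpos (by linarith)]
        linarith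
      rw [integral_sub (habs c _ hIoo1)
        ((integrableOn_const_iff enorm_ne_top).mpr (Or.inr measure_Ioo_lt_top)),
        setIntegral_const, smul_eq_mul, measureReal_def, hvol1, mul_comm] at this
      linarith
    have hhigh : ∫ ω in Set.Ioo m b, |g ω - d|
        ≤ (∫ ω in Set.Ioo m b, |g ω - c|) + (c - d) * (b - m) := by
      have : ∫ ω in Set.Ioo m b, |g ω - d|
          ≤ ∫ ω in Set.Ioo m b, (|g ω - c| + (c - d)) := by
        refine setIntegral_mono_on (habs d _ hIoo2)
          ((habs c _ hIoo2).add ((integrableOn_const_iff enorm_ne_top).mpr (Or.inr measure_Ioo_lt_top)))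
          measurableSet_Ioo ?_
        intro ω hω
        have hgω : d ≤ g ω := hmono hm (hIoo2 hω) hω.1.le
        rw [abs_of_nonneg (by linarith)]
        have : g ω - c ≤ |g ω - c| := le_abs_self _
        linarith
      rw [integral_add (habs c _ hIoo2)
        ((integrableOn_const_iff enorm_ne_top).mpr (Or.inr measure_Ioo_lt_top)),
        setIntegral_const, smul_eq_mul, measureReal_def, hvol2, mul_comm] at this
      linarith
    rw [hmid] at hhigh
    linarith
  · -- c ≤ d
    have hlow : ∫ ω in Set.Ioo a m, |g ω - d|
        ≤ (∫ ω in Set.Ioo a m, |g ω - c|) + (d - c) * (m - a) := by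
      have : ∫ ω in Set.Ioo a m, |g ω - d|
          ≤ ∫ ω in Set.Ioo a m, (|g ω - c| + (d - c)) := by
        refine setIntegral_mono_on (habs d _ hIoo1)
          ((habs c _ hIoo1).add ((integrableOn_const_iff enorm_ne_top).mpr (Or.inr measure_Ioo_lt_top)))
          measurableSet_Ioo ?_
        intro ω hω
        have hgω : g ω ≤ d := hmono (hIoo1 hω) hm hω.2.le
        rw [abs_of_nonpos (by linarith)]
        have : c - g ω ≤ |g ω - c| := by
          rw [abs_sub_comm]; exact le_abs_self _
        linarith
      rw [integral_add (habs c _ hIoo1)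
        ((integrableOn_const_iff enorm_ne_top).mpr (Or.inr measure_Ioo_lt_top)),
        setIntegral_const, smul_eq_mul, measureReal_def, hvol1, mul_comm] at this
      linarith
    have hhigh : ∫ ω in Set.Ioo m b, |g ω - d|
        ≤ (∫ ω in Set.Ioo m b, |g ω - c|) - (d - c) * (b - m) := by
      have : ∫ ω in Set.Ioo m b, |g ω - d|
          ≤ ∫ ω in Set.Ioo m b, (|g ω - c| - (d - c)) := by
        refine setIntegral_mono_on (habs d _ hIoo2)
          ((habs c _ hIoo2).sub ((integrableOn_const_iff enorm_ne_top).mpr (Or.inr measure_Ioo_lt_top)))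
          measurableSet_Ioo ?_
        intro ω hω
        have hgω : d ≤ g ω := hmono hm (hIoo2 hω) hω.1.le
        rw [abs_of_nonneg (by linarith), abs_of_nonneg (by linarith)]
        linarith
      rw [integral_sub (habs c _ hIoo2)
        ((integrableOn_const_iff enorm_ne_top).mpr (Or.inr measure_Ioo_lt_top)),
        setIntegral_const, smul_eq_mul, measureReal_def, hvol2, mul_comm] at this
      linarith
    rw [hmid] at hhigh
    linarith


section Aux2
variable {μ : Measure ℝ} [IsProbabilityMeasure μ]

lemma abs_sub_integrableOn (hint : Integrable (fun x : ℝ => x) μ) {x y e : ℝ}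
    (h01 : Ioo x y ⊆ Ioo (0:ℝ) 1) :
    IntegrableOn (fun ω => |quantileFn μ ω - e|) (Ioc x y) := by
  have h1 : IntegrableOn (fun ω => |quantileFn μ ω - e|) (Ioo x y) :=
    (((quantileFn_integrableOn hint).mono_set h01).sub
      ((integrableOn_const_iff enorm_ne_top).mpr (Or.inr measure_Ioo_lt_top))).abs
  exact h1.congr_set_ae (Ioo_ae_eq_Ioc (α := ℝ) (a := x) (b := y)).symm

lemma W1_quantDist_eq (hint : Integrable (fun x : ℝ => x) μ) {N : ℕ} (hN : 0 < N)
    {c : Fin N → ℝ} (hc : Monotone c) :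
    W1 μ (quantDist c) = ∑ k : Fin N,
      ∫ ω in ((k : ℝ) / N)..(((k : ℝ) + 1) / N), |quantileFn μ ω - c k| := by
  classical
  have hNR : (0 : ℝ) < N := by exact_mod_cast hN
  set g := quantileFn μ with hg
  set q := quantileFn (quantDist c) with hq
  set a : ℕ → ℝ := fun k => k / N with ha
  have hak : ∀ k : ℕ, k < N → Ioo (a k) (a (k+1)) ⊆ Ioo (0:ℝ) 1 := by
    intro k hk
    apply Ioo_subset_Ioo
    · positivity
    · rw [ha]
      push_cast
      rw [div_le_one hNR]
      exact_mod_cast hk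
  have hadj : ∀ k : ℕ, a k < a (k + 1) := by
    intro k
    rw [ha]
    push_cast
    exact (div_lt_div_iff_of_pos_right hNR).mpr (by linarith)
  set c' : ℕ → ℝ := fun k => if h : k < N then c ⟨k, h⟩ else 0 with hc'
  have hqk : ∀ (k : ℕ) (hk : k < N), ∀ ω ∈ Ioc (a k) (a (k+1)), q ω = c ⟨k, hk⟩ := by
    intro k hk ω hω
    refine quantileFn_quantDist hN hc ⟨k, hk⟩ ?_
    simp only [ha] at hω
    push_cast at hω
    exact_mod_cast hω
  have hIg : ∀ (k : ℕ), k < N → ∀ e : ℝ,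
      IntegrableOn (fun ω => |g ω - e|) (Ioc (a k) (a (k+1))) :=
    fun k hk e => abs_sub_integrableOn hint (hak k hk)
  have hIq : ∀ (k : ℕ) (hk : k < N),
      IntegrableOn (fun ω => |g ω - q ω|) (Ioc (a k) (a (k+1))) := by
    intro k hk
    refine (hIg k hk (c ⟨k, hk⟩)).congr_fun ?_ measurableSet_Ioc
    intro ω hω
    show |g ω - c ⟨k, hk⟩| = |g ω - q ω|
    rw [hqk k hk ω hω]
  have hII : ∀ k < N, IntervalIntegrable (fun ω => |g ω - q ω|) volume (a k) (a (k+1)) := by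
    intro k hk
    rw [intervalIntegrable_iff_integrableOn_Ioc_of_le (hadj k).le]
    exact hIq k hk
  have hsplit : ∫ ω in (0:ℝ)..1, |g ω - q ω|
      = ∑ k ∈ Finset.range N, ∫ ω in a k..a (k+1), |g ω - q ω| := by
    rw [intervalIntegral.sum_integral_adjacent_intervals hII]
    have h0 : a 0 = 0 := by simp [ha]
    have h1 : a N = 1 := by rw [ha]; exact div_self hNR.ne'
    rw [h0, h1]
  have hterm : ∀ k ∈ Finset.range N,
      ∫ ω in a k..a (k+1), |g ω - q ω| = ∫ ω in a k..a (k+1), |g ω - c' k| := by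
    intro k hk'
    have hk := Finset.mem_range.mp hk'
    rw [intervalIntegral.integral_of_le (hadj k).le, intervalIntegral.integral_of_le (hadj k).le]
    refine setIntegral_congr_fun measurableSet_Ioc ?_
    intro ω hω
    show |g ω - q ω| = |g ω - c' k|
    rw [hqk k hk ω hω, hc']
    simp [hk]
  rw [W1, hsplit, Finset.sum_congr rfl hterm,
    ← Fin.sum_univ_eq_sum_range (fun k => ∫ ω in a k..a (k+1), |g ω - c' k|) N]
  refine Finset.sum_congr rfl (fun i _ => ?_)
  have h1 : c' (i : ℕ) = c i := by simp [hc', i.isLt]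
  have h2 : a (i : ℕ) = (i : ℝ) / N := rfl
  have h3 : a ((i : ℕ) + 1) = ((i : ℝ) + 1) / N := by simp [ha]
  rw [h1, h2, h3]

end Aux2

lemma quantDist_comp_perm {N : ℕ} (θ : Fin N → ℝ) (e : Equiv.Perm (Fin N)) :
    quantDist (θ ∘ e) = quantDist θ := by
  rw [quantDist, quantDist]
  congr 1
  exact Equiv.sum_comp e (fun i => Measure.dirac (θ i))


/-- the quantile distribution with atoms at the quantile midpoints
`F_μ⁻¹((2i-1)/(2N))` minimizes the 1-Wasserstein distance to `μ` over all uniform mixtures of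
`N` Diracs. (Here `i : Fin N` is 0-indexed, so the midpoint is `(2i+1)/(2N)`.) -/
theorem quantile_projection_minimizes_W1
    (μ : Measure ℝ) [IsProbabilityMeasure μ] (hint : Integrable (fun x : ℝ => x) μ)
    (N : ℕ) (hN : 1 ≤ N) (θ : Fin N → ℝ) :
    W1 μ (quantDist fun i : Fin N => quantileFn μ ((2 * (i : ℝ) + 1) / (2 * N)))
      ≤ W1 μ (quantDist θ) := by
  have hN0 : 0 < N := hN
  have hNR : (0 : ℝ) < N := by exact_mod_cast hN0
  set g := quantileFn μ with hg
  have hmid_mem : ∀ i : Fin N, (2 * (i : ℝ) + 1) / (2 * N) ∈ Ioo (0:ℝ) 1 := by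
    intro i
    constructor
    · positivity
    · rw [div_lt_one (by positivity)]
      have : (i : ℝ) + 1 ≤ N := by exact_mod_cast i.isLt
      linarith
  have hmono_star : Monotone (fun i : Fin N => g ((2 * (i : ℝ) + 1) / (2 * N))) := by
    intro i j hij
    have hij' : (i : ℝ) ≤ (j : ℝ) := by exact_mod_cast hij
    exact quantileFn_monotoneOn (hmid_mem i) (hmid_mem j) (by gcongr)
  set c : Fin N → ℝ := θ ∘ Tuple.sort θ with hcdef
  have hc : Monotone c := Tuple.monotone_sort θ
  have hθeq : quantDist θ = quantDist c := (quantDist_comp_perm θ (Tuple.sort θ)).symm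
  rw [hθeq, W1_quantDist_eq hint hN0 hc, W1_quantDist_eq hint hN0 hmono_star]
  refine Finset.sum_le_sum (fun k _ => ?_)
  have hk1 : (k : ℝ) + 1 ≤ N := by exact_mod_cast k.isLt
  have hsub : Ioo ((k : ℝ) / N) (((k : ℝ) + 1) / N) ⊆ Ioo (0:ℝ) 1 := by
    apply Ioo_subset_Ioo
    · positivity
    · rw [div_le_one hNR]; exact hk1
  have hmid : (2 * (k : ℝ) + 1) / (2 * N) ∈ Ioo ((k : ℝ) / N) (((k : ℝ) + 1) / N) := by
    constructor
    · rw [div_lt_div_iff₀ (by positivity) (by positivity)]; ring_nf; nlinarith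
    · rw [div_lt_div_iff₀ (by positivity) (by positivity)]; ring_nf; nlinarith
  exact integral_Ioo_abs_sub_le hmid.1 hmid.2
    (by field_simp; ring)
    (quantileFn_monotoneOn.mono hsub)
    ((quantileFn_integrableOn hint).mono_set hsub)
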